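/- Let (Ω, F, P) be a probability space, ε : Ω → ℝⁿ a random vector with independent, square-integrable coordinates satisfying E[ε_i] = 0 and E[ε_i²] = σ² for each i, and set Y = Xβ* + ε. Then for every 1 ≤ k < n, E[(1/n) · min_{Q∈P_{k,1}} ‖Q(XXᵀ)Y‖²] ≤ 4 ρ^{2k} · [ (1/n)‖Xβ*‖² + σ² ], where ρ = (√C − 1)/(√C + 1) and C = λ_1/λ_n is the ratio of the largest to the smallest eigenvalue of XXᵀ. (By the polynomial characterization of PLS, min_{Q∈P_{k,1}} ‖Q(XXᵀ)Y‖² equals the PLS residual ‖Y − Xβ̂_k‖² at step k.) -/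

import Mathlib

open Matrix Polynomial MeasureTheory ProbabilityTheory


open Polynomial.Chebyshev

lemma cheb_abs_le (k : ℤ) (y : ℝ) (h1 : -1 ≤ y) (h2 : y ≤ 1) :
    |(T ℝ k).eval y| ≤ 1 := by
  have : y = Real.cos (Real.arccos y) := (Real.cos_arccos h1 h2).symm
  rw [this, T_real_cos]
  exact Real.abs_cos_le_one _

lemma cheb_eval_cosh (k : ℤ) (t : ℝ) :
    (T ℝ k).eval (Real.cosh t) = Real.cosh (k * t) := by
  have h := T_complex_cos (↑t * Complex.I) k
  rw [Complex.cos_mul_I] at h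
  apply Complex.ofReal_injective
  calc (((T ℝ k).eval (Real.cosh t) : ℝ) : ℂ)
      = (T ℂ k).eval ((Real.cosh t : ℝ) : ℂ) := by
        rw [← map_T Complex.ofRealHom k, eval_map]
        exact (eval₂_at_apply Complex.ofRealHom (Real.cosh t)).symm
    _ = Complex.cos (↑k * (↑t * Complex.I)) := by rw [Complex.ofReal_cosh, h]
    _ = ((Real.cosh (k*t) : ℝ) : ℂ) := by
        rw [show (k : ℂ) * (↑t * Complex.I) = ((k * t : ℝ) : ℂ) * Complex.I by push_cast; ring,
          Complex.cos_mul_I, Complex.ofReal_cosh]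

lemma natDegree_T_le (m : ℕ) : (T ℝ (m : ℤ)).natDegree ≤ m := by
  induction m using Nat.strong_induction_on with
  | _ m ih =>
    match m with
    | 0 => simp [T_zero]
    | 1 => simp [T_one]
    | (m+2) =>
      rw [show ((m+2 : ℕ) : ℤ) = (m : ℤ) + 2 by push_cast; ring, T_add_two]
      calc (2 * X * T ℝ ((m:ℤ)+1) - T ℝ (m:ℤ)).natDegree
          ≤ max (2 * X * T ℝ ((m:ℤ)+1)).natDegree (T ℝ (m:ℤ)).natDegree := natDegree_sub_le _ _
        _ ≤ m + 2 := by
            apply max_le _ (le_trans (ih m (by omega)) (by omega))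
            calc (2 * X * T ℝ ((m:ℤ)+1)).natDegree
                ≤ (2*X : ℝ[X]).natDegree + (T ℝ ((m:ℤ)+1)).natDegree := natDegree_mul_le
              _ ≤ 1 + (m+1) := by
                  gcongr
                  · calc (2*X : ℝ[X]).natDegree ≤ (2:ℝ[X]).natDegree + (X:ℝ[X]).natDegree :=
                        natDegree_mul_le
                      _ ≤ 1 := by simp
                  · exact_mod_cast ih (m+1) (by omega)
              _ = m + 2 := by omega

lemma coshalg (a b s : ℝ) (ha : 0 < a) (hab : a < b) (hs1 : 1 < s) (hssq : s ^ 2 = b / a) :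
    ((s + 1) / (s - 1) + ((s + 1) / (s - 1))⁻¹) / 2 = (b + a) / (b - a) := by
  have hsm : s - 1 ≠ 0 := by intro h; nlinarith
  have hsp : s + 1 ≠ 0 := by intro h; nlinarith
  have hba : b - a ≠ 0 := by intro h; nlinarith
  have hb' : b = a * s ^ 2 := by field_simp at hssq; linarith
  subst hb'
  have hs2 : s ^ 2 - 1 ≠ 0 := by intro h; nlinarith
  have hs2' : -1 + s ^ 2 ≠ 0 := by intro h; nlinarith
  field_simp
  ring

lemma poly_exists (a b : ℝ) (ha : 0 < a) (hab : a ≤ b) (k : ℕ) (hk : 1 ≤ k) :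
    ∃ Q : ℝ[X], Q.natDegree ≤ k ∧ Q.eval 0 = 1 ∧ ∀ x, a ≤ x → x ≤ b →
      |Q.eval x| ≤ 2 * ((Real.sqrt (b/a) - 1)/(Real.sqrt (b/a) + 1))^k := by
  rcases eq_or_lt_of_le hab with rfl | hab
  · refine ⟨(1 - C a⁻¹ * X)^k, ?_, by simp, ?_⟩
    · calc ((1 - C a⁻¹ * X)^k).natDegree ≤ k * (1 - C a⁻¹ * X).natDegree := natDegree_pow_le
        _ ≤ k * 1 := by
            gcongr
            refine le_trans (natDegree_sub_le _ _) (max_le (by simp) ?_)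
            exact le_trans (natDegree_C_mul_le _ _) (by simp)
        _ = k := by omega
    · intro x hx1 hx2
      have hxa : x = a := le_antisymm hx2 hx1
      subst hxa
      rw [div_self ha.ne', Real.sqrt_one]
      simp [eval_pow, inv_mul_cancel₀ (ne_of_gt (lt_of_lt_of_le ha hx1)), zero_pow (by omega : k ≠ 0)]
  · set s := Real.sqrt (b/a) with hs
    have hb : 0 < b := ha.trans hab
    have hba : 1 < b / a := (one_lt_div ha).2 hab
    have hs1 : 1 < s := by
      rw [hs, show (1:ℝ) = Real.sqrt 1 by simp]
      exact Real.sqrt_lt_sqrt (by norm_num) hba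
    have hssq : s ^ 2 = b / a := Real.sq_sqrt (by positivity)
    set z := (s + 1) / (s - 1) with hz
    have hz1 : 1 < z := by
      rw [hz, lt_div_iff₀ (by linarith)]; linarith
    have hz0 : 0 < z := by linarith
    set t := Real.log z with ht
    set c := (b + a) / (b - a) with hc
    have hcosh : Real.cosh t = c := by
      rw [Real.cosh_eq, ht, Real.exp_log hz0, Real.exp_neg, Real.exp_log hz0, hz, hc]
      exact coshalg a b s ha hab hs1 hssq
    set Tc := (T ℝ (k:ℤ)).eval c with hTcdef
    have hTc : Tc = Real.cosh ((k:ℝ) * t) := by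
      rw [hTcdef, ← hcosh, cheb_eval_cosh]; norm_num
    have ht0 : 0 < t := Real.log_pos hz1
    have hzk : Real.exp ((k:ℝ) * t) = z ^ k := by
      rw [Real.exp_nat_mul, Real.exp_log hz0]
    have hTclb : z ^ k / 2 ≤ Tc := by
      rw [hTc, Real.cosh_eq, ← hzk]
      have := Real.exp_pos (-((k:ℝ)*t))
      linarith
    have hTcpos : 0 < Tc := lt_of_lt_of_le (by positivity) hTclb
    have hinv : Tc⁻¹ ≤ 2 * ((s - 1)/(s + 1)) ^ k := by
      have h1 : ((s-1)/(s+1)) = z⁻¹ := by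
        rw [hz, inv_div]
      rw [h1, inv_pow]
      calc Tc⁻¹ ≤ (z ^ k / 2)⁻¹ := by
            apply inv_anti₀ (by positivity) hTclb
        _ = 2 * (z ^ k)⁻¹ := by rw [inv_div, div_eq_mul_inv]
    refine ⟨C Tc⁻¹ * ((T ℝ (k:ℤ)).comp (C c - C (2/(b-a)) * X)), ?_, ?_, ?_⟩
    · calc (C Tc⁻¹ * ((T ℝ (k:ℤ)).comp (C c - C (2/(b-a)) * X))).natDegree
          ≤ ((T ℝ (k:ℤ)).comp (C c - C (2/(b-a)) * X)).natDegree := natDegree_C_mul_le _ _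
        _ ≤ (T ℝ (k:ℤ)).natDegree * (C c - C (2/(b-a)) * X).natDegree := natDegree_comp_le
        _ ≤ k * 1 := by
            apply Nat.mul_le_mul (natDegree_T_le k)
            refine le_trans (natDegree_sub_le _ _) (max_le (by simp) ?_)
            exact le_trans (natDegree_C_mul_le _ _) (by simp)
        _ = k := by omega
    · simp [eval_comp, inv_mul_cancel₀ hTcpos.ne']; exact inv_mul_cancel₀ hTcpos.ne'
    · intro x hx1 hx2
      have hba' : 0 < b - a := by linarith
      set y := c - 2/(b-a) * x with hy
      have hyform : y = (b + a - 2*x)/(b-a) := by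
        rw [hy, hc]; field_simp; try ring
      have hy1 : -1 ≤ y := by
        rw [hyform, le_div_iff₀ hba']; linarith
      have hy2 : y ≤ 1 := by
        rw [hyform, div_le_one hba']; linarith
      have heval : (C Tc⁻¹ * ((T ℝ (k:ℤ)).comp (C c - C (2/(b-a)) * X))).eval x
          = Tc⁻¹ * (T ℝ (k:ℤ)).eval y := by
        simp [eval_comp, hy]
      rw [heval, abs_mul, abs_of_pos (inv_pos.2 hTcpos)]
      calc Tc⁻¹ * |(T ℝ (k:ℤ)).eval y| ≤ Tc⁻¹ * 1 :=
            mul_le_mul_of_nonneg_left (cheb_abs_le _ _ hy1 hy2) (le_of_lt (inv_pos.2 hTcpos))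
        _ = Tc⁻¹ := mul_one _
        _ ≤ 2 * ((s - 1)/(s + 1)) ^ k := hinv

open Matrix

lemma conj_aeval {m : Type*} [Fintype m] [DecidableEq m]
    (U A : Matrix m m ℝ) (d : m → ℝ)
    (hU1 : star U * U = 1) (hU2 : U * star U = 1)
    (hA : A = U * diagonal d * star U) (Q : ℝ[X]) :
    Polynomial.aeval A Q = U * diagonal (fun i => Q.eval (d i)) * star U := by
  have hpow : ∀ j : ℕ, A ^ j = U * (diagonal d) ^ j * star U := by
    intro j
    induction j with
    | zero => simp [pow_zero, hU2]
    | succ j ih =>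
      rw [pow_succ, ih, hA, pow_succ]
      calc U * diagonal d ^ j * star U * (U * diagonal d * star U)
          = U * diagonal d ^ j * (star U * U) * diagonal d * star U := by
            simp only [Matrix.mul_assoc]
        _ = U * (diagonal d ^ j * diagonal d) * star U := by
            rw [hU1]; simp only [Matrix.mul_one, Matrix.mul_assoc]
  induction Q using Polynomial.induction_on' with
  | add p q hp hq =>
    simp only [map_add, hp, hq, eval_add]
    rw [show (diagonal fun i => eval (d i) p + eval (d i) q)
        = diagonal (fun i => eval (d i) p) + diagonal (fun i => eval (d i) q) by
      rw [diagonal_add]]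
    rw [Matrix.mul_add, Matrix.add_mul]
  | monomial j a =>
    rw [aeval_monomial, hpow]
    have hfun : (fun i => eval (d i) ((monomial j) a)) = a • (d ^ j) := by
      funext i; simp [eval_monomial]
    have h2 : (diagonal fun i => eval (d i) ((monomial j) a)) = a • (diagonal d) ^ j := by
      rw [hfun, diagonal_smul, diagonal_pow]
    rw [h2, Algebra.algebraMap_eq_smul_one]
    rw [Matrix.smul_mul, Matrix.mul_smul, Matrix.smul_mul, Matrix.one_mul]

lemma sum_sq_mulVec_unitary {m : Type*} [Fintype m] [DecidableEq m]
    (U : Matrix m m ℝ) (hU1 : star U * U = 1) (u : m → ℝ) :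
    ∑ i, ((U *ᵥ u) i)^2 = ∑ i, (u i)^2 := by
  have h1 : ∀ f : m → ℝ, ∑ i, (f i)^2 = f ⬝ᵥ f := by
    intro f; simp [dotProduct, pow_two]
  have hT : Uᵀ * U = 1 := by
    rw [← conjTranspose_eq_transpose_of_trivial, ← star_eq_conjTranspose, hU1]
  rw [h1, h1, dotProduct_mulVec, vecMul_mulVec, hT, vecMul_one]

lemma spectral_bound {m : Type*} [Fintype m] [DecidableEq m] (A : Matrix m m ℝ)
    (hA : A.IsHermitian) (Q : ℝ[X]) (M : ℝ)
    (hM : ∀ i, |Q.eval (hA.eigenvalues i)| ≤ M) (v : m → ℝ) :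
    ∑ i, ((Polynomial.aeval A Q *ᵥ v) i)^2 ≤ M^2 * ∑ i, (v i)^2 := by
  set U : Matrix m m ℝ := (Matrix.IsHermitian.eigenvectorUnitary hA : Matrix m m ℝ) with hUdef
  have hU1 : star U * U = 1 := by
    exact (Matrix.mem_unitaryGroup_iff').mp (Matrix.IsHermitian.eigenvectorUnitary hA).2
  have hU2 : U * star U = 1 := by
    exact (Matrix.mem_unitaryGroup_iff).mp (Matrix.IsHermitian.eigenvectorUnitary hA).2
  have hspec : A = U * diagonal hA.eigenvalues * star U := by
    have := hA.spectral_theorem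
    simpa using this
  rw [conj_aeval U A hA.eigenvalues hU1 hU2 hspec Q]
  rw [show (U * diagonal (fun i => Q.eval (hA.eigenvalues i)) * star U) *ᵥ v
      = U *ᵥ (diagonal (fun i => Q.eval (hA.eigenvalues i)) *ᵥ (star U *ᵥ v)) by
    rw [← mulVec_mulVec, ← mulVec_mulVec]]
  rw [sum_sq_mulVec_unitary U hU1]
  set w := star U *ᵥ v with hw
  have hwsum : ∑ i, (w i)^2 = ∑ i, (v i)^2 := by
    have hsU : star (star U) * star U = 1 := by rw [star_star]; exact hU2
    exact sum_sq_mulVec_unitary (star U) hsU v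
  rw [← hwsum, Finset.mul_sum]
  apply Finset.sum_le_sum
  intro i _
  rw [mulVec_diagonal]
  have hM0 : 0 ≤ M := le_trans (abs_nonneg _) (hM i)
  calc (Q.eval (hA.eigenvalues i) * w i)^2 = (Q.eval (hA.eigenvalues i))^2 * (w i)^2 := by ring
    _ ≤ M^2 * (w i)^2 := by
        apply mul_le_mul_of_nonneg_right _ (sq_nonneg _)
        rw [← sq_abs]
        exact pow_le_pow_left₀ (abs_nonneg _) (hM i) 2

open MeasureTheory ProbabilityTheory

/-- for Y = Xβ* + ε with independent square-integrable centered noise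
coordinates of variance σ², and 1 ≤ k < n,
E[(1/n) min_{Q∈P_{k,1}} ‖Q(XXᵀ)Y‖²] ≤ 4ρ^{2k} ((1/n)‖Xβ*‖² + σ²), where
ρ = (√C − 1)/(√C + 1) and C = λ_1/λ_n is the ratio of the extreme eigenvalues of XXᵀ. -/
theorem stmt15 {n p : ℕ}
    (X : Matrix (Fin n) (Fin p) ℝ) (βstar : Fin p → ℝ)
    (hA : (X * Xᵀ).PosDef)
    (lam1 lamn : ℝ)
    (hlam1 : IsGreatest (Set.range hA.1.eigenvalues) lam1)
    (hlamn : IsLeast (Set.range hA.1.eigenvalues) lamn)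
    {Ω : Type*} [MeasurableSpace Ω] (P : Measure Ω) [IsProbabilityMeasure P]
    (eps : Ω → Fin n → ℝ) (σ2 : ℝ)
    (hmeas : ∀ i, Measurable fun ω => eps ω i)
    (hindep : iIndepFun (fun i ω => eps ω i) P)
    (hL2 : ∀ i, MemLp (fun ω => eps ω i) 2 P)
    (hmean : ∀ i, ∫ ω, eps ω i ∂P = 0)
    (hvar : ∀ i, ∫ ω, (eps ω i) ^ 2 ∂P = σ2)
    (k : ℕ) (hk1 : 1 ≤ k) (hkn : k < n) :
    ∫ ω, (1 / n : ℝ) *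
        sInf {r : ℝ | ∃ Q : Polynomial ℝ, Q.natDegree ≤ k ∧ Q.eval 0 = 1 ∧
          r = ∑ i, (((Polynomial.aeval (X * Xᵀ)) Q *ᵥ (X *ᵥ βstar + eps ω)) i) ^ 2} ∂P
      ≤ 4 * ((Real.sqrt (lam1 / lamn) - 1) / (Real.sqrt (lam1 / lamn) + 1)) ^ (2 * k) *
          ((1 / n : ℝ) * ∑ i, ((X *ᵥ βstar) i) ^ 2 + σ2) := by
  classical
  have hn : 0 < n := by omega
  have hn' : (n : ℝ) ≠ 0 := Nat.cast_ne_zero.2 hn.ne'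
  obtain ⟨j, hj⟩ := hlamn.1
  have ha0 : 0 < lamn := hj ▸ hA.eigenvalues_pos j
  have hab : lamn ≤ lam1 := hlam1.2 hlamn.1
  obtain ⟨Q, hQdeg, hQ0, hQb⟩ := poly_exists lamn lam1 ha0 hab k hk1
  set ρ : ℝ := (Real.sqrt (lam1 / lamn) - 1) / (Real.sqrt (lam1 / lamn) + 1) with hρ
  set M : ℝ := 2 * ρ ^ k with hM
  have hMi : ∀ i, |Q.eval (hA.1.eigenvalues i)| ≤ M := fun i =>
    hQb _ (hlamn.2 ⟨i, rfl⟩) (hlam1.2 ⟨i, rfl⟩)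
  set bvec := X *ᵥ βstar with hbvec
  -- pointwise bound
  set S : Ω → Set ℝ := fun ω => {r : ℝ | ∃ Q : Polynomial ℝ, Q.natDegree ≤ k ∧ Q.eval 0 = 1 ∧
      r = ∑ i, (((Polynomial.aeval (X * Xᵀ)) Q *ᵥ (bvec + eps ω)) i) ^ 2} with hS
  have hmem : ∀ ω, (∑ i, (((Polynomial.aeval (X * Xᵀ)) Q *ᵥ (bvec + eps ω)) i) ^ 2) ∈ S ω :=
    fun ω => ⟨Q, hQdeg, hQ0, rfl⟩
  have hbdd : ∀ ω, BddBelow (S ω) := by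
    intro ω
    refine ⟨0, ?_⟩
    rintro r ⟨Q', h1, h2, rfl⟩
    positivity
  have h0 : ∀ ω, 0 ≤ (1 / n : ℝ) * sInf (S ω) := by
    intro ω
    apply mul_nonneg (by positivity)
    apply le_csInf ⟨_, hmem ω⟩
    rintro r ⟨Q', h1, h2, rfl⟩
    positivity
  have hptwise : ∀ ω, (1 / n : ℝ) * sInf (S ω)
      ≤ (1 / n : ℝ) * (M ^ 2 * ∑ i, (bvec i + eps ω i) ^ 2) := by
    intro ω
    apply mul_le_mul_of_nonneg_left _ (by positivity)
    refine le_trans (csInf_le (hbdd ω) (hmem ω)) ?_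
    have := spectral_bound (X * Xᵀ) hA.1 Q M hMi (bvec + eps ω)
    simpa [Pi.add_apply] using this
  -- integrability
  have hint : ∀ i : Fin n, Integrable (fun ω => (bvec i + eps ω i) ^ 2) P := fun i =>
    ((memLp_const (bvec i)).add (hL2 i)).integrable_sq
  have hsumint : Integrable (fun ω => ∑ i, (bvec i + eps ω i) ^ 2) P :=
    integrable_finset_sum _ fun i _ => hint i
  have hgint : Integrable (fun ω => (1 / n : ℝ) * (M ^ 2 * ∑ i, (bvec i + eps ω i) ^ 2)) P :=
    (hsumint.const_mul _).const_mul _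
  -- value of each integral
  have hval : ∀ i : Fin n, ∫ ω, (bvec i + eps ω i) ^ 2 ∂P = (bvec i) ^ 2 + σ2 := by
    intro i
    have hei : Integrable (fun ω => eps ω i) P := (hL2 i).integrable one_le_two
    have he2 : Integrable (fun ω => (eps ω i) ^ 2) P := (hL2 i).integrable_sq
    calc ∫ ω, (bvec i + eps ω i) ^ 2 ∂P
        = ∫ ω, ((bvec i) ^ 2 + (2 * bvec i) * eps ω i + (eps ω i) ^ 2) ∂P := by
          congr 1; funext ω; ring
      _ = (∫ ω, ((bvec i) ^ 2 + (2 * bvec i) * eps ω i) ∂P) + ∫ ω, (eps ω i) ^ 2 ∂P :=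
          integral_add ((integrable_const _).add (hei.const_mul _)) he2
      _ = ((∫ ω, ((bvec i) ^ 2 : ℝ) ∂P) + ∫ ω, (2 * bvec i) * eps ω i ∂P) + σ2 := by
          rw [integral_add (integrable_const _) (hei.const_mul _), hvar]
      _ = (bvec i) ^ 2 + σ2 := by
          rw [integral_const, integral_const_mul, hmean]
          simp
  -- final computation
  have hcalc : ∫ ω, (1 / n : ℝ) * (M ^ 2 * ∑ i, (bvec i + eps ω i) ^ 2) ∂P
      = 4 * ρ ^ (2 * k) * ((1 / n : ℝ) * ∑ i, (bvec i) ^ 2 + σ2) := by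
    rw [integral_const_mul, integral_const_mul, integral_finset_sum _ fun i _ => hint i]
    have h1 : ∑ i : Fin n, ((bvec i) ^ 2 + σ2) = (∑ i, (bvec i) ^ 2) + n * σ2 := by
      rw [Finset.sum_add_distrib, Finset.sum_const, Finset.card_univ, Fintype.card_fin,
        nsmul_eq_mul]
    have hM2 : M ^ 2 = 4 * ρ ^ (2 * k) := by
      rw [hM, mul_pow, ← pow_mul, mul_comm k 2]; norm_num
    have hfin : ∀ c Sb : ℝ, (1 / (n:ℝ)) * (c * (Sb + n * σ2)) = c * ((1 / (n:ℝ)) * Sb + σ2) := by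
      intro c Sb
      have h2 : (1 / (n:ℝ)) * ((n:ℝ) * σ2) = σ2 := by
        field_simp
      calc (1 / (n:ℝ)) * (c * (Sb + n * σ2))
          = c * ((1 / (n:ℝ)) * Sb + (1 / (n:ℝ)) * ((n:ℝ) * σ2)) := by ring
        _ = c * ((1 / (n:ℝ)) * Sb + σ2) := by rw [h2]
    simp_rw [hval]
    rw [h1, hM2, hfin]
  refine le_trans (integral_mono_of_nonneg (Filter.Eventually.of_forall h0) hgint
    (Filter.Eventually.of_forall hptwise)) (le_of_eq hcalc)
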